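/- For the presentation μ = (⟨x, y, t⟩; {y⁻¹xyx⁻², t⁻¹xty⁻¹, a}) of the trivial group, if Area_μ(x) > E_{n-1}, then any sequence of elementary Tietze transformations (Op₁^{±1}: insert/delete x_j x_j⁻¹ in a relator; Op₂: cyclic permutation of a relator; Op₃: inversion of a relator; Op₄: multiply one relator by another; Op₅^{±1}: add/remove a generator together with itself as a relator) reducing μ to the empty presentation has length greater than log₂(E_{n-1}) ≥ E_{n-2}. -/

import Mathlib

/-- Tower of exponentials: E 0 = 1, E (n+1) = 2^(E n). -/
def E : ℕ → ℕ
  | 0 => 1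
  | n + 1 => 2 ^ E n

/-- Words over n generators and their inverses. -/
abbrev W (n : ℕ) := List (Fin n × Bool)

/-- Formal inverse of a word. -/
def winv {n : ℕ} (w : W n) : W n := (w.map fun p => (p.1, !p.2)).reverse

/-- Re-reading a word over n generators as a word over n+1 generators. -/
def embW {n : ℕ} (w : W n) : W (n + 1) := w.map fun p => (p.1.castSucc, p.2)

/-- A finite presentation: a number of generators and a list of relator words. -/
structure Pres where
  n : ℕ
  rels : List (W n)

/-- Elementary Tietze transformations. -/
inductive Tietze : Pres → Pres → Prop where
  /-- Op₁: insert x_j^ε x_j^{-ε} inside a relator. -/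
  | op1 (n : ℕ) (l : List (W n)) (i : ℕ) (a b : W n) (j : Fin n) (e : Bool)
      (h : l[i]? = some (a ++ b)) :
      Tietze ⟨n, l⟩ ⟨n, l.set i (a ++ [(j, e), (j, !e)] ++ b)⟩
  /-- Op₁⁻¹: delete x_j^ε x_j^{-ε} inside a relator. -/
  | op1inv (n : ℕ) (l : List (W n)) (i : ℕ) (a b : W n) (j : Fin n) (e : Bool)
      (h : l[i]? = some (a ++ [(j, e), (j, !e)] ++ b)) :
      Tietze ⟨n, l⟩ ⟨n, l.set i (a ++ b)⟩
  /-- Op₂: cyclically permute a relator. -/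
  | op2 (n : ℕ) (l : List (W n)) (i : ℕ) (u v : W n)
      (h : l[i]? = some (u ++ v)) :
      Tietze ⟨n, l⟩ ⟨n, l.set i (v ++ u)⟩
  /-- Op₃: invert a relator. -/
  | op3 (n : ℕ) (l : List (W n)) (i : ℕ) (a : W n) (h : l[i]? = some a) :
      Tietze ⟨n, l⟩ ⟨n, l.set i (winv a)⟩
  /-- Op₄: multiply a relator by another relator. -/
  | op4 (n : ℕ) (l : List (W n)) (i j : ℕ) (a b : W n) (hij : i ≠ j)
      (ha : l[i]? = some a) (hb : l[j]? = some b) :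
      Tietze ⟨n, l⟩ ⟨n, l.set i (a ++ b)⟩
  /-- Op₅: add a fresh generator together with itself as a relator. -/
  | op5 (n : ℕ) (l : List (W n)) :
      Tietze ⟨n, l⟩ ⟨n + 1, l.map embW ++ [[(Fin.last n, true)]]⟩
  /-- Op₅⁻¹: remove a generator occurring as a relator. -/
  | op5inv (n : ℕ) (l : List (W n)) :
      Tietze ⟨n + 1, l.map embW ++ [[(Fin.last n, true)]]⟩ ⟨n, l⟩

/-- `w` is a product of `N` conjugates `g r^±1 g⁻¹` with `r ∈ S`, in the free group. -/
def IsConjProd {X : Type*} (S : Set (FreeGroup X)) (N : ℕ) (w : FreeGroup X) : Prop :=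
  ∃ g r : Fin N → FreeGroup X, ∃ ε : Fin N → ℤ,
    (∀ i, r i ∈ S ∧ (ε i = 1 ∨ ε i = -1)) ∧
    w = (List.ofFn fun i => g i * r i ^ ε i * (g i)⁻¹).prod

section Aux

variable {X Y : Type*}

def Form (S : Set (FreeGroup X)) (u : FreeGroup X) : Prop :=
  ∃ g r : FreeGroup X, ∃ ε : ℤ, r ∈ S ∧ (ε = 1 ∨ ε = -1) ∧ u = g * r ^ ε * g⁻¹

def CPle (S : Set (FreeGroup X)) (N : ℕ) (w : FreeGroup X) : Prop :=
  ∃ L : List (FreeGroup X), L.length ≤ N ∧ (∀ u ∈ L, Form S u) ∧ L.prod = w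

def SmallElt {m : ℕ} (g : FreeGroup (Fin m)) : Prop := g = 1 ∨ ∃ j, g = FreeGroup.of j

def relsSet (P : Pres) : Set (FreeGroup (Fin P.n)) :=
  {g | ∃ w ∈ P.rels, FreeGroup.mk w = g}

def Pred (P : Pres) (N : ℕ) : Prop :=
  ∀ x : FreeGroup (Fin P.n), SmallElt x → CPle (relsSet P) N x

lemma CPle_one (S : Set (FreeGroup X)) (N : ℕ) : CPle S N 1 :=
  ⟨[], by simp, by simp, by simp⟩

lemma CPle.mono {S : Set (FreeGroup X)} {N N' : ℕ} {w} (h : N ≤ N')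
    (hw : CPle S N w) : CPle S N' w := by
  obtain ⟨L, h1, h2, h3⟩ := hw
  exact ⟨L, le_trans h1 h, h2, h3⟩

lemma conj_map_prod (g : FreeGroup X) (L : List (FreeGroup X)) :
    (L.map fun u => g * u * g⁻¹).prod = g * L.prod * g⁻¹ := by
  induction L with
  | nil => simp
  | cons u L ih => simp [ih]

lemma CPle.conj {S : Set (FreeGroup X)} {N : ℕ} {v : FreeGroup X}
    (hv : CPle S N v) (g : FreeGroup X) : CPle S N (g * v * g⁻¹) := by
  obtain ⟨L, h1, h2, h3⟩ := hv
  refine ⟨L.map fun u => g * u * g⁻¹, by simpa using h1, ?_, by rw [conj_map_prod, h3]⟩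
  intro u hu
  simp only [List.mem_map] at hu
  obtain ⟨u', hu', rfl⟩ := hu
  obtain ⟨g', r, ε, hr, hε, rfl⟩ := h2 u' hu'
  exact ⟨g * g', r, ε, hr, hε, by group⟩

lemma CPle.mul {S : Set (FreeGroup X)} {N M : ℕ} {v w : FreeGroup X}
    (hv : CPle S N v) (hw : CPle S M w) : CPle S (N + M) (v * w) := by
  obtain ⟨L, h1, h2, h3⟩ := hv
  obtain ⟨L', h1', h2', h3'⟩ := hw
  refine ⟨L ++ L', by simp; omega, ?_, by simp [h3, h3']⟩
  intro u hu
  rcases List.mem_append.1 hu with h | h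
  exacts [h2 u h, h2' u h]

lemma CPle_mem {S : Set (FreeGroup X)} {r : FreeGroup X} (hr : r ∈ S) :
    CPle S 1 r ∧ CPle S 1 r⁻¹ := by
  constructor
  · exact ⟨[r], by simp, fun u hu => by
      simp only [List.mem_singleton] at hu
      exact ⟨1, r, 1, hr, Or.inl rfl, by rw [hu]; group⟩, by simp⟩
  · exact ⟨[r⁻¹], by simp, fun u hu => by
      simp only [List.mem_singleton] at hu
      exact ⟨1, r, -1, hr, Or.inr rfl, by rw [hu]; group⟩, by simp⟩

lemma transfer (f : FreeGroup X →* FreeGroup Y) {S : Set (FreeGroup X)}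
    {T : Set (FreeGroup Y)}
    (hS : ∀ s ∈ S, CPle T 2 (f s) ∧ CPle T 2 (f s)⁻¹) :
    ∀ {N : ℕ} {w : FreeGroup X}, CPle S N w → CPle T (2 * N) (f w) := by
  have main : ∀ L : List (FreeGroup X), (∀ u ∈ L, Form S u) →
      CPle T (2 * L.length) (f L.prod) := by
    intro L
    induction L with
    | nil => intro _; simpa using CPle_one T 0
    | cons u L ih =>
      intro hL
      have h1 : CPle T (2 * L.length) (f L.prod) := ih fun u hu => hL u (by simp [hu])
      obtain ⟨g, r, ε, hr, hε, rfl⟩ := hL u (by simp)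
      have hfu : f (g * r ^ ε * g⁻¹) = f g * (f r) ^ ε * (f g)⁻¹ := by
        simp [map_mul, map_zpow, map_inv]
      have h2 : CPle T 2 (f (g * r ^ ε * g⁻¹)) := by
        rw [hfu]
        rcases hε with rfl | rfl
        · simpa using ((hS r hr).1).conj (f g)
        · simpa using ((hS r hr).2).conj (f g)
      have := h2.mul h1
      rw [List.prod_cons, map_mul]
      refine this.mono ?_ |>.mono (le_refl _)
      simp [List.length_cons]; omega
  rintro N w ⟨L, h1, h2, h3⟩
  subst h3
  exact (main L h2).mono (by omega)

end Aux


section Aux2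

variable {X : Type*}

lemma CPle_of_eq {S : Set (FreeGroup X)} {r s : FreeGroup X} (hr : r ∈ S) (hs : s = r) :
    CPle S 2 s ∧ CPle S 2 s⁻¹ := by
  subst hs
  exact ⟨(CPle_mem hr).1.mono one_le_two, (CPle_mem hr).2.mono one_le_two⟩

lemma CPle_of_one {S : Set (FreeGroup X)} {s : FreeGroup X} (hs : s = 1) :
    CPle S 2 s ∧ CPle S 2 s⁻¹ := by
  subst hs
  refine ⟨CPle_one S 2, ?_⟩
  rw [inv_one]
  exact CPle_one S 2

lemma CPle_of_conj {S : Set (FreeGroup X)} {r s c : FreeGroup X} (hr : r ∈ S)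
    (hs : s = c * r * c⁻¹) : CPle S 2 s ∧ CPle S 2 s⁻¹ := by
  subst hs
  constructor
  · exact ((CPle_mem hr).1.conj c).mono one_le_two
  · rw [show (c * r * c⁻¹)⁻¹ = c * r⁻¹ * c⁻¹ by group]
    exact ((CPle_mem hr).2.conj c).mono one_le_two

lemma CPle_of_inv {S : Set (FreeGroup X)} {r s : FreeGroup X} (hr : r ∈ S)
    (hs : s = r⁻¹) : CPle S 2 s ∧ CPle S 2 s⁻¹ := by
  subst hs
  exact ⟨(CPle_mem hr).2.mono one_le_two, by simpa using (CPle_mem hr).1.mono one_le_two⟩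

lemma CPle_of_mul {S : Set (FreeGroup X)} {r₁ r₂ s : FreeGroup X} (hr1 : r₁ ∈ S)
    (hr2 : r₂ ∈ S) (hs : s = r₁ * r₂) : CPle S 2 s ∧ CPle S 2 s⁻¹ := by
  subst hs
  constructor
  · exact (CPle_mem hr1).1.mul (CPle_mem hr2).1
  · rw [mul_inv_rev]
    exact (CPle_mem hr2).2.mul (CPle_mem hr1).2

lemma mk_pair_one {n : ℕ} (j : Fin n) (e : Bool) :
    FreeGroup.mk [(j, e), (j, !e)] = 1 := by
  have h : ([(j, e), (j, !e)] : W n) = [(j, e)] ++ [(j, !e)] := rfl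
  have h1 : (FreeGroup.mk [(j, true)] : FreeGroup (Fin n)) = FreeGroup.of j := rfl
  have h2 : (FreeGroup.mk [(j, false)] : FreeGroup (Fin n)) = (FreeGroup.of j)⁻¹ := by
    rw [← h1, FreeGroup.inv_mk]
    simp [FreeGroup.invRev]
  rw [h, ← FreeGroup.mul_mk]
  cases e
  · rw [Bool.not_false, h2, h1]; group
  · rw [Bool.not_true, h1, h2]; group

lemma mk_insert {n : ℕ} (a b : W n) (j : Fin n) (e : Bool) :
    FreeGroup.mk (a ++ [(j, e), (j, !e)] ++ b) = FreeGroup.mk (a ++ b) := by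
  rw [show a ++ [(j, e), (j, !e)] ++ b = a ++ ([(j, e), (j, !e)] ++ b) by simp,
    ← FreeGroup.mul_mk, ← FreeGroup.mul_mk, mk_pair_one, one_mul, FreeGroup.mul_mk]

def embHom (n : ℕ) : FreeGroup (Fin n) →* FreeGroup (Fin (n + 1)) :=
  FreeGroup.map Fin.castSucc

def projHom (n : ℕ) : FreeGroup (Fin (n + 1)) →* FreeGroup (Fin n) :=
  FreeGroup.lift fun j => Fin.lastCases 1 FreeGroup.of j

lemma embHom_of (n : ℕ) (j : Fin n) :
    embHom n (FreeGroup.of j) = FreeGroup.of j.castSucc :=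
  FreeGroup.map.of

lemma embHom_mk (n : ℕ) (w : W n) :
    embHom n (FreeGroup.mk w) = FreeGroup.mk (embW w) :=
  FreeGroup.map.mk

lemma projHom_embHom (n : ℕ) (x : FreeGroup (Fin n)) :
    projHom n (embHom n x) = x := by
  have h : (projHom n).comp (embHom n) = MonoidHom.id _ := by
    apply FreeGroup.ext_hom
    intro a
    simp [projHom, embHom_of, FreeGroup.lift_apply_of]
  calc projHom n (embHom n x) = ((projHom n).comp (embHom n)) x := rfl
    _ = x := by rw [h]; rfl

lemma projHom_of_last (n : ℕ) : projHom n (FreeGroup.of (Fin.last n)) = 1 := by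
  simp [projHom, FreeGroup.lift_apply_of]

lemma same_gen {n : ℕ} {l l' : List (W n)}
    (hrel : ∀ w ∈ l', CPle (relsSet ⟨n, l⟩) 2 (FreeGroup.mk w) ∧
      CPle (relsSet ⟨n, l⟩) 2 (FreeGroup.mk w)⁻¹)
    {N : ℕ} (hQ : Pred ⟨n, l'⟩ N) : Pred ⟨n, l⟩ (2 * N + 1) := by
  intro x hx
  have h2 : CPle (relsSet ⟨n, l⟩) (2 * N) ((MonoidHom.id (FreeGroup (Fin n))) x) :=
    transfer (MonoidHom.id _)
      (fun s hs => by obtain ⟨w, hw, rfl⟩ := hs; exact hrel w hw) (hQ x hx)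
  exact h2.mono (by omega)

lemma key {P Q : Pres} (h : Tietze P Q) {N : ℕ} (hQ : Pred Q N) : Pred P (2 * N + 1) := by
  cases h with
  | op1 n l i a b j e h =>
    refine same_gen (fun w hw => ?_) hQ
    rcases List.mem_or_eq_of_mem_set hw with hm | rfl
    · exact CPle_of_eq ⟨w, hm, rfl⟩ rfl
    · exact CPle_of_eq ⟨a ++ b, List.mem_of_getElem? h, rfl⟩ (mk_insert a b j e)
  | op1inv n l i a b j e h =>
    refine same_gen (fun w hw => ?_) hQ
    rcases List.mem_or_eq_of_mem_set hw with hm | rfl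
    · exact CPle_of_eq ⟨w, hm, rfl⟩ rfl
    · exact CPle_of_eq ⟨a ++ [(j, e), (j, !e)] ++ b, List.mem_of_getElem? h, rfl⟩
        (mk_insert a b j e).symm
  | op2 n l i u v h =>
    refine same_gen (fun w hw => ?_) hQ
    rcases List.mem_or_eq_of_mem_set hw with hm | rfl
    · exact CPle_of_eq ⟨w, hm, rfl⟩ rfl
    · refine CPle_of_conj (c := (FreeGroup.mk u)⁻¹) ⟨u ++ v, List.mem_of_getElem? h, rfl⟩ ?_
      rw [← FreeGroup.mul_mk, ← FreeGroup.mul_mk]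
      group
  | op3 n l i a h =>
    refine same_gen (fun w hw => ?_) hQ
    rcases List.mem_or_eq_of_mem_set hw with hm | rfl
    · exact CPle_of_eq ⟨w, hm, rfl⟩ rfl
    · refine CPle_of_inv ⟨a, List.mem_of_getElem? h, rfl⟩ ?_
      rw [FreeGroup.inv_mk]
      rfl
  | op4 n l i j a b hij ha hb =>
    refine same_gen (fun w hw => ?_) hQ
    rcases List.mem_or_eq_of_mem_set hw with hm | rfl
    · exact CPle_of_eq ⟨w, hm, rfl⟩ rfl
    · exact CPle_of_mul ⟨a, List.mem_of_getElem? ha, rfl⟩ ⟨b, List.mem_of_getElem? hb, rfl⟩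
        (FreeGroup.mul_mk).symm
  | op5 n l =>
    intro x hx
    have hy : SmallElt (embHom n x) := by
      rcases hx with rfl | ⟨j, rfl⟩
      · exact Or.inl (map_one _)
      · exact Or.inr ⟨j.castSucc, embHom_of n j⟩
    have h1 := hQ (embHom n x) hy
    have hS : ∀ s ∈ relsSet ⟨n + 1, l.map embW ++ [[(Fin.last n, true)]]⟩,
        CPle (relsSet ⟨n, l⟩) 2 (projHom n s) ∧ CPle (relsSet ⟨n, l⟩) 2 (projHom n s)⁻¹ := by
      rintro s ⟨w, hw, rfl⟩
      rcases List.mem_append.1 hw with hm | hm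
      · obtain ⟨r, hr, rfl⟩ := List.mem_map.1 hm
        refine CPle_of_eq ⟨r, hr, rfl⟩ ?_
        rw [← embHom_mk, projHom_embHom]
      · rw [List.mem_singleton] at hm
        subst hm
        exact CPle_of_one (projHom_of_last n)
    have h2 := transfer (projHom n) hS h1
    rw [projHom_embHom] at h2
    exact h2.mono (by omega)
  | op5inv n l =>
    intro x hx
    rcases hx with rfl | ⟨j, rfl⟩
    · exact CPle_one _ _
    · rcases Fin.eq_castSucc_or_eq_last j with ⟨m, rfl⟩ | rfl
      · have h1 := hQ (FreeGroup.of m) (Or.inr ⟨m, rfl⟩)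
        have hS : ∀ s ∈ relsSet ⟨n, l⟩,
            CPle (relsSet ⟨n + 1, l.map embW ++ [[(Fin.last n, true)]]⟩) 2 (embHom n s) ∧
            CPle (relsSet ⟨n + 1, l.map embW ++ [[(Fin.last n, true)]]⟩) 2 (embHom n s)⁻¹ := by
          rintro s ⟨w, hw, rfl⟩
          exact CPle_of_eq ⟨embW w, List.mem_append_left _ (List.mem_map.2 ⟨w, hw, rfl⟩), rfl⟩
            (embHom_mk n w)
        have h2 := transfer (embHom n) hS h1
        rw [embHom_of] at h2
        exact h2.mono (by omega)
      · have hmem : FreeGroup.of (Fin.last n) ∈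
            relsSet ⟨n + 1, l.map embW ++ [[(Fin.last n, true)]]⟩ :=
          ⟨[(Fin.last n, true)], List.mem_append_right _ (List.mem_singleton.2 rfl), rfl⟩
        exact ((CPle_mem hmem).1).mono (by omega)

end Aux2

lemma isConjProd_of_forms {X : Type*} {S : Set (FreeGroup X)} {L : List (FreeGroup X)}
    (hL : ∀ u ∈ L, Form S u) : IsConjProd S L.length L.prod := by
  have hch : ∀ i : Fin L.length, ∃ t : FreeGroup X × FreeGroup X × ℤ,
      t.2.1 ∈ S ∧ (t.2.2 = 1 ∨ t.2.2 = -1) ∧ L.get i = t.1 * t.2.1 ^ t.2.2 * t.1⁻¹ := by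
    intro i
    obtain ⟨g, r, ε, hr, hε, hu⟩ := hL (L.get i) (L.get_mem i)
    exact ⟨(g, r, ε), hr, hε, hu⟩
  choose t ht using hch
  refine ⟨fun i => (t i).1, fun i => (t i).2.1, fun i => (t i).2.2,
    fun i => ⟨(ht i).1, (ht i).2.1⟩, ?_⟩
  have hofn : (List.ofFn fun i => (t i).1 * (t i).2.1 ^ (t i).2.2 * ((t i).1)⁻¹) = L := by
    rw [show (fun i => (t i).1 * (t i).2.1 ^ (t i).2.2 * ((t i).1)⁻¹) = L.get from
      funext fun i => ((ht i).2.2).symm]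
    exact List.ofFn_get L
  rw [hofn]

lemma isConjProd_mono {X : Type*} {S T : Set (FreeGroup X)} (hST : S ⊆ T) {N : ℕ}
    {w : FreeGroup X} (h : IsConjProd S N w) : IsConjProd T N w := by
  obtain ⟨g, r, ε, h1, h2⟩ := h
  exact ⟨g, r, ε, fun i => ⟨hST (h1 i).1, (h1 i).2⟩, h2⟩


/-- The relator word y⁻¹xyx⁻² over the generators x, y, t (indices 0, 1, 2). -/
def r1w : W 3 := [(1, false), (0, true), (1, true), (0, false), (0, false)]

/-- The relator word t⁻¹xty⁻¹. -/
def r2w : W 3 := [(2, false), (0, true), (2, true), (1, false)]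

/-- For μ = (x, y, t; y⁻¹xyx⁻², t⁻¹xty⁻¹, a): if Area_μ(x) > E (n-1), then every
sequence of elementary Tietze transformations from μ to the empty presentation has
length greater than log₂(E (n-1)) = E (n-2). -/
theorem stmt19 (n : ℕ) (hn : 2 ≤ n) (a : W 3)
    (hArea : ∀ N : ℕ,
      IsConjProd {FreeGroup.mk r1w, FreeGroup.mk r2w, FreeGroup.mk a} N
        (FreeGroup.of (0 : Fin 3)) → E (n - 1) < N)
    (k : ℕ) (seq : Fin (k + 1) → Pres)
    (h0 : seq 0 = ⟨3, [r1w, r2w, a]⟩)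
    (hlast : seq (Fin.last k) = ⟨0, []⟩)
    (hstep : ∀ i : Fin k, Tietze (seq i.castSucc) (seq i.succ)) :
    E (n - 2) < k := by
  have chain : ∀ d, d ≤ k → Pred (seq ⟨k - d, by omega⟩) (2 ^ d - 1) := by
    intro d
    induction d with
    | zero =>
      intro _
      have e : (⟨k - 0, by omega⟩ : Fin (k + 1)) = Fin.last k := by
        apply Fin.ext; simp [Fin.last]
      rw [e, hlast]
      intro x hx
      rcases hx with rfl | ⟨j, _⟩
      · exact CPle_one _ _
      · exact j.elim0
    | succ d ih =>
      intro hd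
      have hT := hstep ⟨k - (d + 1), by omega⟩
      have e1 : ((⟨k - (d + 1), by omega⟩ : Fin k).castSucc : Fin (k + 1)) =
          ⟨k - (d + 1), by omega⟩ := by
        apply Fin.ext; simp
      have e2 : ((⟨k - (d + 1), by omega⟩ : Fin k).succ : Fin (k + 1)) =
          ⟨k - d, by omega⟩ := by
        apply Fin.ext; simp [Fin.succ]; omega
      rw [e1, e2] at hT
      have h3 := key hT (ih (by omega))
      have harith : 2 * (2 ^ d - 1) + 1 = 2 ^ (d + 1) - 1 := by
        have h4 : 1 ≤ 2 ^ d := Nat.one_le_two_pow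
        have h5 : 2 ^ (d + 1) = 2 * 2 ^ d := by ring
        omega
      rwa [harith] at h3
  have hP0 : Pred (seq 0) (2 ^ k - 1) := by
    have hc := chain k le_rfl
    have e : (⟨k - k, by omega⟩ : Fin (k + 1)) = 0 := by
      apply Fin.ext; simp
    rwa [e] at hc
  rw [h0] at hP0
  obtain ⟨L, hlen, hform, hprod⟩ := hP0 (FreeGroup.of (0 : Fin 3)) (Or.inr ⟨0, rfl⟩)
  have hc : IsConjProd (relsSet ⟨3, [r1w, r2w, a]⟩) L.length (FreeGroup.of (0 : Fin 3)) := by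
    rw [← hprod]; exact isConjProd_of_forms hform
  have hsub : relsSet ⟨3, [r1w, r2w, a]⟩ ⊆
      {FreeGroup.mk r1w, FreeGroup.mk r2w, FreeGroup.mk a} := by
    rintro s ⟨w, hw, rfl⟩
    simp only [List.mem_cons, List.mem_singleton, List.not_mem_nil, or_false] at hw
    rcases hw with h | h | h <;> rw [h] <;> simp
  have hlt := hArea _ (isConjProd_mono hsub hc)
  have hE : E (n - 1) = 2 ^ E (n - 2) := by
    have e : n - 1 = (n - 2) + 1 := by omega
    rw [e]; rfl
  have h2k : 2 ^ E (n - 2) < 2 ^ k := by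
    rw [← hE]
    have h6 : 1 ≤ 2 ^ k := Nat.one_le_two_pow
    omega
  exact (Nat.pow_lt_pow_iff_right one_lt_two).1 h2k
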